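/- Suppose Q : ℝ → ℝ is C² and solves Q'' = λ(w₁)Q − λ(Q)w₁ with Q(ζ) → w₁, Q'(ζ) → 0 as ζ → −∞ and Q(ζ) → w_i, Q'(ζ) → 0 as ζ → +∞, where λ is continuous. Then ∫₀^{w₁} (λ(s)w₁ − λ(w₁)s) ds = ∫₀^{w_i} (λ(s)w₁ − λ(w₁)s) ds. -/

import Mathlib

/-- A heteroclinic solution of Q'' = λ(w₁)Q − λ(Q)w₁ connecting
w₁ (at −∞) to w_i (at +∞) with vanishing derivative at ±∞ forces the integral
condition ∫₀^{w₁}(λ(s)w₁ − λ(w₁)s) ds = ∫₀^{w_i}(λ(s)w₁ − λ(w₁)s) ds. -/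
theorem heteroclinic_integral_condition
    (lam Q : ℝ → ℝ) (w₁ wi : ℝ)
    (hlC : Continuous lam) (hQ : ContDiff ℝ 2 Q)
    (hODE : ∀ ζ, deriv (deriv Q) ζ = lam w₁ * Q ζ - lam (Q ζ) * w₁)
    (hQm : Filter.Tendsto Q Filter.atBot (nhds w₁))
    (hQm' : Filter.Tendsto (deriv Q) Filter.atBot (nhds 0))
    (hQp : Filter.Tendsto Q Filter.atTop (nhds wi))
    (hQp' : Filter.Tendsto (deriv Q) Filter.atTop (nhds 0)) :
    (∫ s in (0:ℝ)..w₁, (lam s * w₁ - lam w₁ * s)) =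
      ∫ s in (0:ℝ)..wi, (lam s * w₁ - lam w₁ * s) := by
  set f : ℝ → ℝ := fun s => lam s * w₁ - lam w₁ * s with hf
  have hfc : Continuous f := (hlC.mul continuous_const).sub (continuous_const.mul continuous_id)
  set F : ℝ → ℝ := fun q => ∫ s in (0:ℝ)..q, f s with hF
  have hFd : ∀ x, HasDerivAt F (f x) x := by
    intro x
    exact intervalIntegral.integral_hasDerivAt_right (hfc.intervalIntegrable _ _)
      (hfc.stronglyMeasurableAtFilter _ _) hfc.continuousAt
  have hQd : Differentiable ℝ Q := hQ.differentiable (by norm_num)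
  have hQd2 : Differentiable ℝ (deriv Q) := by
    have h2 : ContDiff ℝ ((1:ℕ∞)+1) Q := by
      apply hQ.of_le
      norm_num
    exact (contDiff_succ_iff_deriv.mp h2).2.2.differentiable (by norm_num)
  set E : ℝ → ℝ := fun ζ => (deriv Q ζ)^2 / 2 + F (Q ζ) with hE
  have hEd : ∀ ζ, HasDerivAt E 0 ζ := by
    intro ζ
    have h1 : HasDerivAt (fun ζ => (deriv Q ζ)^2 / 2)
        ((2 * deriv Q ζ ^ 1 * deriv (deriv Q) ζ) / 2) ζ :=
      (((hQd2 ζ).hasDerivAt).pow 2).div_const 2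
    have h2 : HasDerivAt (fun ζ => F (Q ζ)) (f (Q ζ) * deriv Q ζ) ζ :=
      (hFd (Q ζ)).comp ζ (hQd ζ).hasDerivAt
    have h3 := h1.add h2
    have heq : (2 * deriv Q ζ ^ 1 * deriv (deriv Q) ζ) / 2 + f (Q ζ) * deriv Q ζ = 0 := by
      rw [hODE ζ]; simp only [hf]; ring
    rw [heq] at h3
    exact h3
  have hconst : ∀ ζ, E ζ = E 0 := by
    intro ζ
    exact is_const_of_deriv_eq_zero (fun x => (hEd x).differentiableAt)
      (fun x => (hEd x).deriv) ζ 0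
  have hEconst : E = fun _ => E 0 := funext hconst
  have hFc : Continuous F :=
    (Differentiable.continuous (fun x => (hFd x).differentiableAt))
  have hbot : Filter.Tendsto E Filter.atBot (nhds (0^2/2 + F w₁)) := by
    exact ((hQm'.pow 2).div_const 2).add ((hFc.continuousAt.tendsto).comp hQm)
  have htop : Filter.Tendsto E Filter.atTop (nhds (0^2/2 + F wi)) := by
    exact ((hQp'.pow 2).div_const 2).add ((hFc.continuousAt.tendsto).comp hQp)
  have hbot' : Filter.Tendsto E Filter.atBot (nhds (E 0)) := by
    rw [hEconst]; exact tendsto_const_nhds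
  have htop' : Filter.Tendsto E Filter.atTop (nhds (E 0)) := by
    rw [hEconst]; exact tendsto_const_nhds
  have e1 : 0^2/2 + F w₁ = E 0 := tendsto_nhds_unique hbot hbot'
  have e2 : 0^2/2 + F wi = E 0 := tendsto_nhds_unique htop htop'
  have : F w₁ = F wi := by linarith [e1, e2]
  simpa [hF, hf] using this
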